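/- Let n be a natural number and f : (Fin n → ZMod 2) → ZMod 2 a Boolean function. If the phase vector of f is a product state, i.e., there exist h : Fin n → ZMod 2 → ℂ with (-1 : ℂ)^((f x).val) = ∏ i, h i (x i) for all x, then there exist c : ZMod 2 and a : Fin n → ZMod 2 such that f(x) = (∑ i, a i * x i) + c for all x. (Any non-entangling function for the Deutsch–Jozsa algorithm equals f_{c,a} for some c and a.) -/

import Mathlib

lemma L1 (u v : ZMod 2) : (-1:ℂ)^((u+v).val) = (-1:ℂ)^u.val * (-1:ℂ)^v.val := by
  have h0 : ((0:ZMod 2)).val = 0 := by decide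
  have h1 : ((1:ZMod 2)).val = 1 := by decide
  have h2 : ((1+1:ZMod 2)).val = 0 := by decide
  rcases (by decide : ∀ w : ZMod 2, w = 0 ∨ w = 1) u with rfl | rfl <;> rcases (by decide : ∀ w : ZMod 2, w = 0 ∨ w = 1) v with rfl | rfl <;> simp [h0, h1, h2]

lemma L2 (u v : ZMod 2) (huv : (-1:ℂ)^u.val = (-1:ℂ)^v.val) : u = v := by
  have h0 : ((0:ZMod 2)).val = 0 := by decide
  have h1 : ((1:ZMod 2)).val = 1 := by decide
  rcases (by decide : ∀ w : ZMod 2, w = 0 ∨ w = 1) u with rfl | rfl <;> rcases (by decide : ∀ w : ZMod 2, w = 0 ∨ w = 1) v with rfl | rfl <;> simp_all [h0, h1] <;> norm_num at huv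

lemma L3 {ι : Type*} (s : Finset ι) (u : ι → ZMod 2) :
    (-1:ℂ)^((∑ i ∈ s, u i).val) = ∏ i ∈ s, (-1:ℂ)^((u i).val) := by
  induction s using Finset.cons_induction with
  | empty => simp
  | cons a s ha ih => rw [Finset.sum_cons, Finset.prod_cons, L1, ih]

/-- If the phase vector of a Boolean function `f` is a product state, then
`f = f_{c,a}` for some `c : ZMod 2` and `a : Fin n → ZMod 2`. -/
theorem nonentangling_implies_fca (n : ℕ) (f : (Fin n → ZMod 2) → ZMod 2)
    (h : Fin n → ZMod 2 → ℂ)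
    (hprod : ∀ x : Fin n → ZMod 2, (-1 : ℂ) ^ ((f x).val) = ∏ i, h i (x i)) :
    ∃ (c : ZMod 2) (a : Fin n → ZMod 2),
      ∀ x : Fin n → ZMod 2, f x = (∑ i, a i * x i) + c := by
  refine ⟨f 0, fun i => f (Pi.single i 1) + f 0, fun x => ?_⟩
  have hne : ∀ i v, h i v ≠ 0 := by
    intro i v h0
    have := hprod (Function.update 0 i v)
    rw [Finset.prod_eq_zero (Finset.mem_univ i) (by rw [Function.update_self]; exact h0)] at this
    exact pow_ne_zero _ (by norm_num : (-1:ℂ) ≠ 0) this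
  have key : ∀ i, h i (x i) =
      (-1:ℂ)^(((f (Pi.single i 1) + f 0) * x i).val) * h i 0 := by
    intro i
    have hx : x i = 0 ∨ x i = 1 := by
      have hall : ∀ v : ZMod 2, v = 0 ∨ v = 1 := by decide
      exact hall (x i)
    rcases hx with hx | hx
    · rw [hx]; norm_num
    · rw [hx, mul_one]
      have e1 := hprod (Pi.single i 1)
      have e2 := hprod 0
      have p1 : ∏ j, h j ((Pi.single i 1 : Fin n → ZMod 2) j) =
          h i 1 * ∏ j ∈ Finset.univ.erase i, h j 0 := by
        rw [← Finset.mul_prod_erase Finset.univ _ (Finset.mem_univ i), Pi.single_eq_same]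
        congr 1
        exact Finset.prod_congr rfl fun j hj => by
          rw [Pi.single_eq_of_ne (Finset.ne_of_mem_erase hj)]
      have p2 : ∏ j, h j ((0 : Fin n → ZMod 2) j) =
          h i 0 * ∏ j ∈ Finset.univ.erase i, h j 0 := by
        rw [← Finset.mul_prod_erase Finset.univ _ (Finset.mem_univ i)]; rfl
      rw [p1] at e1; rw [p2] at e2
      have hP : (∏ j ∈ Finset.univ.erase i, h j 0) ≠ 0 :=
        Finset.prod_ne_zero_iff.2 fun j _ => hne j 0
      have hfa : (f (Pi.single i 1) + f 0) + f 0 = f (Pi.single i 1) := by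
        rw [add_assoc, CharTwo.add_self_eq_zero, add_zero]
      have hcalc : h i 1 * (∏ j ∈ Finset.univ.erase i, h j 0) =
          ((-1:ℂ)^(((f (Pi.single i 1) + f 0)).val) * h i 0) *
            (∏ j ∈ Finset.univ.erase i, h j 0) := by
        rw [← e1, mul_assoc, ← e2, ← L1, hfa]
      exact mul_right_cancel₀ hP hcalc
  apply L2
  rw [hprod x, L1, L3]
  calc ∏ i, h i (x i)
      = ∏ i, ((-1:ℂ)^(((f (Pi.single i 1) + f 0) * x i).val) * h i 0) :=
        Finset.prod_congr rfl fun i _ => key i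
    _ = (∏ i, (-1:ℂ)^(((f (Pi.single i 1) + f 0) * x i).val)) * ∏ i, h i 0 :=
        Finset.prod_mul_distrib
    _ = (∏ i, (-1:ℂ)^(((f (Pi.single i 1) + f 0) * x i).val)) * (-1:ℂ)^((f 0).val) := by
        have e0 : (-1:ℂ)^((f 0 : ZMod 2).val) = ∏ i, h i 0 := by simpa using hprod 0
        rw [e0]
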